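/- Let a, b be real numbers with 0 < a < b, let f : ℝ → ℝ be continuous on [a,b) and strictly positive on (a,b), with f(a) = 0, and suppose f is differentiable at a with f'(a) > 0. Fix ρ₀ > 0, define I(r) = ∫_a^r (1/√(f(x)) − 1)/x dx and ρ(r) = ρ₀·r·exp(I(r)) for r ∈ (a,b), and set ρ₊ = ρ₀·a. Then, as r → a from the right, ln(ρ(r)/ρ₊)/√(r − a) tends to γ := 2/(a·√(f'(a))). -/

import Mathlib

open MeasureTheory Set Real Filter Topology

/-- Square-root law of the isotropic radius at a simple (nonextremal) horizon:
as r → a⁺, ln(ρ(r)/ρ₊)/√(r − a) → γ = 2/(a√(f'(a))). -/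
theorem isotropic_radius_sqrt_law_at_horizon
    (a b : ℝ) (ha : 0 < a) (hab : a < b) (f : ℝ → ℝ)
    (hcont : ContinuousOn f (Set.Ico a b))
    (hpos : ∀ x ∈ Set.Ioo a b, 0 < f x)
    (hfa : f a = 0)
    (f' : ℝ) (hderiv : HasDerivAt f f' a) (hf' : 0 < f')
    (ρ₀ : ℝ) (hρ₀ : 0 < ρ₀)
    (I ρ : ℝ → ℝ)
    (hI : ∀ r ∈ Set.Ioo a b, I r = ∫ x in a..r, (1 / Real.sqrt (f x) - 1) / x)
    (hρ : ∀ r ∈ Set.Ioo a b, ρ r = ρ₀ * r * Real.exp (I r)) :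
    Tendsto (fun r => Real.log (ρ r / (ρ₀ * a)) / Real.sqrt (r - a))
      (nhdsWithin a (Set.Ioo a b)) (nhds (2 / (a * Real.sqrt f'))) := by
  have ha0 : (a : ℝ) ≠ 0 := ne_of_gt ha
  have hsf' : 0 < Real.sqrt f' := Real.sqrt_pos.2 hf'
  set g : ℝ → ℝ := fun x => (1 / Real.sqrt (f x) - 1) / x with hgdef
  -- continuity of g on Ioo a b
  have hgcont : ContinuousOn g (Set.Ioo a b) := by
    apply ContinuousOn.div
    · exact (continuousOn_const.div ((hcont.mono Set.Ioo_subset_Ico_self).sqrt)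
        (fun x hx => (Real.sqrt_pos.2 (hpos x hx)).ne')).sub continuousOn_const
    · exact continuousOn_id
    · intro x hx; exact ne_of_gt (lt_trans ha hx.1)
  -- slope of f tends to f'
  have hslope : Tendsto (fun x => f x / (x - a)) (𝓝[>] a) (𝓝 f') := by
    have h1 := hasDerivAt_iff_tendsto_slope.1 hderiv
    have h2 := h1.mono_left (nhdsWithin_mono a
      (fun x hx => Set.mem_compl_singleton_iff.2 (ne_of_gt hx)))
    exact h2.congr (fun x => by rw [slope_def_field, hfa, sub_zero])
  -- pick c where f x ≥ f'/2 * (x − a)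
  obtain ⟨u, hu, husub⟩ := mem_nhdsGT_iff_exists_Ioo_subset.1
    (hslope.eventually (eventually_gt_nhds (half_lt_self hf')))
  set c : ℝ := min u ((a + b) / 2) with hcdef
  have hac : a < c := lt_min hu (by linarith)
  have hcb : c < b := lt_of_le_of_lt (min_le_right _ _) (by linarith)
  have hIoocb : Set.Ioo a c ⊆ Set.Ioo a b :=
    Set.Ioo_subset_Ioo le_rfl hcb.le
  have hlow : ∀ x ∈ Set.Ioo a c, f' / 2 * (x - a) ≤ f x := by
    intro x hx
    have hx' : f' / 2 < f x / (x - a) :=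
      husub (Set.Ioo_subset_Ioo le_rfl (min_le_left _ _) hx)
    have hxa : 0 < x - a := sub_pos.2 hx.1
    exact ((lt_div_iff₀ hxa).1 hx').le
  -- pointwise bound on ‖g‖
  set K : ℝ := (Real.sqrt (f' / 2))⁻¹ with hKdef
  have hK : 0 < K := inv_pos.2 (Real.sqrt_pos.2 (by linarith))
  have hbnd : ∀ x ∈ Set.Ioo a c, ‖g x‖ ≤ (K * (x - a) ^ (-(1/2) : ℝ) + 1) / a := by
    intro x hx
    have hxa : 0 < x - a := sub_pos.2 hx.1
    have hfx : 0 < f x := hpos x (hIoocb hx)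
    have hxpos : 0 < x := ha.trans hx.1
    have hsf : 0 < Real.sqrt (f x) := Real.sqrt_pos.2 hfx
    have hsq : Real.sqrt (f' / 2) * Real.sqrt (x - a) ≤ Real.sqrt (f x) := by
      rw [← Real.sqrt_mul (by linarith : (0:ℝ) ≤ f' / 2)]
      exact Real.sqrt_le_sqrt (hlow x hx)
    have hden : 0 < Real.sqrt (f' / 2) * Real.sqrt (x - a) :=
      mul_pos (Real.sqrt_pos.2 (by linarith)) (Real.sqrt_pos.2 hxa)
    have h1 : 1 / Real.sqrt (f x) ≤ K * (x - a) ^ (-(1/2) : ℝ) := by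
      have : 1 / Real.sqrt (f x) ≤ 1 / (Real.sqrt (f' / 2) * Real.sqrt (x - a)) :=
        one_div_le_one_div_of_le hden hsq
      refine this.trans (le_of_eq ?_)
      rw [Real.rpow_neg hxa.le, ← Real.sqrt_eq_rpow, hKdef, one_div, mul_inv]
    have habs : |1 / Real.sqrt (f x) - 1| ≤ 1 / Real.sqrt (f x) + 1 := by
      calc |1 / Real.sqrt (f x) - 1| ≤ |1 / Real.sqrt (f x)| + |1| := abs_sub _ _
        _ = 1 / Real.sqrt (f x) + 1 := by
            rw [abs_one, abs_of_pos (by positivity : (0:ℝ) < 1 / Real.sqrt (f x))]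
    have hgabs : ‖g x‖ ≤ (1 / Real.sqrt (f x) + 1) / x := by
      simp only [hgdef, Real.norm_eq_abs, abs_div, abs_of_pos hxpos]
      gcongr
    refine hgabs.trans ?_
    have h2 : (1 / Real.sqrt (f x) + 1) / x ≤ (1 / Real.sqrt (f x) + 1) / a := by
      gcongr
      exact hx.1.le
    refine h2.trans ((div_le_div_iff_of_pos_right ha).2 (by linarith))
  -- integrability of g on (a, r] for r ∈ Ioo a c
  have hint : ∀ r ∈ Set.Ioo a c, IntervalIntegrable g volume a r := by
    intro r hr
    rw [intervalIntegrable_iff_integrableOn_Ioc_of_le hr.1.le]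
    have hmeas : AEStronglyMeasurable g (volume.restrict (Set.Ioc a r)) := by
      apply (hgcont.mono ?_).aestronglyMeasurable measurableSet_Ioc
      exact fun x hx => ⟨hx.1, hx.2.trans_lt (hr.2.trans hcb)⟩
    have hhint : IntegrableOn (fun x => (K * (x - a) ^ (-(1/2) : ℝ) + 1) / a)
        (Set.Ioc a r) volume := by
      rw [← intervalIntegrable_iff_integrableOn_Ioc_of_le hr.1.le]
      apply IntervalIntegrable.div_const
      apply IntervalIntegrable.add _ intervalIntegrable_const
      apply IntervalIntegrable.const_mul
      have h0 : IntervalIntegrable (fun x : ℝ => x ^ (-(1/2) : ℝ)) volume 0 (r - a) :=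
        intervalIntegral.intervalIntegrable_rpow' (by norm_num)
      have := h0.comp_sub_right a
      simpa using this
    refine Integrable.mono' hhint hmeas ?_
    rw [ae_restrict_iff' measurableSet_Ioc]
    filter_upwards with x hx
    exact hbnd x ⟨hx.1, hx.2.trans_lt hr.2⟩
  -- derivative of I on Ioo a c
  have hIderiv : ∀ r ∈ Set.Ioo a c, HasDerivAt I (g r) r := by
    intro r hr
    have hrb : r ∈ Set.Ioo a b := hIoocb hr
    have h1 : HasDerivAt (fun u => ∫ x in a..u, g x) (g r) r :=
      intervalIntegral.integral_hasDerivAt_right (hint r hr)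
        (hgcont.stronglyMeasurableAtFilter isOpen_Ioo r hrb)
        (hgcont.continuousAt (Ioo_mem_nhds hrb.1 hrb.2))
    apply h1.congr_of_eventuallyEq
    filter_upwards [Ioo_mem_nhds hrb.1 hrb.2] with x hx
    exact hI x hx
  -- derivative of the denominator
  have hsderiv : ∀ r ∈ Set.Ioo a c,
      HasDerivAt (fun u => Real.sqrt (u - a)) (1 / (2 * Real.sqrt (r - a))) r := by
    intro r hr
    have h0 : r - a ≠ 0 := sub_ne_zero.2 (ne_of_gt hr.1)
    have := (Real.hasDerivAt_sqrt h0).comp r ((hasDerivAt_id r).sub_const a)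
    simpa [Function.comp_def] using this
  -- I → 0
  have hI0 : Tendsto I (𝓝[>] a) (𝓝 0) := by
    set r0 : ℝ := (a + c) / 2 with hr0def
    have hr0 : r0 ∈ Set.Ioo a c := ⟨by rw [hr0def]; linarith, by rw [hr0def]; linarith⟩
    have hcont0 : ContinuousOn (fun u => ∫ x in a..u, g x) (Set.uIcc a r0) :=
      intervalIntegral.continuousOn_primitive_interval' (hint r0 hr0) Set.left_mem_uIcc
    have h1 : Tendsto (fun u => ∫ x in a..u, g x) (𝓝[Set.uIcc a r0] a) (𝓝 0) := by
      have := (hcont0 a Set.left_mem_uIcc)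
      simpa [ContinuousWithinAt, intervalIntegral.integral_same] using this
    have h2 : Tendsto (fun u => ∫ x in a..u, g x) (𝓝[>] a) (𝓝 0) := by
      refine h1.mono_left ?_
      rw [← nhdsWithin_Ioo_eq_nhdsGT hr0.1]
      exact nhdsWithin_mono a (fun x hx => by
        rw [Set.uIcc_of_le hr0.1.le]; exact ⟨hx.1.le, hx.2.le⟩)
    apply h2.congr'
    filter_upwards [Ioo_mem_nhdsGT_of_mem ⟨le_refl a, hab⟩] with x hx
    exact (hI x hx).symm
  -- √(r−a) → 0
  have hga : Tendsto (fun r => Real.sqrt (r - a)) (𝓝[>] a) (𝓝 0) := by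
    have h : Continuous fun r : ℝ => Real.sqrt (r - a) :=
      Real.continuous_sqrt.comp (continuous_id.sub continuous_const)
    have := h.tendsto' a 0 (by simp)
    exact this.mono_left nhdsWithin_le_nhds
  -- ratio of derivatives tends to γ
  have hdiv : Tendsto (fun r => g r / (1 / (2 * Real.sqrt (r - a)))) (𝓝[>] a)
      (𝓝 (2 / (a * Real.sqrt f'))) := by
    have h1 : Tendsto (fun r => (r - a) / f r) (𝓝[>] a) (𝓝 f'⁻¹) := by
      have := hslope.inv₀ (ne_of_gt hf')
      exact this.congr (fun x => by rw [inv_div])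
    have h2 : Tendsto (fun r => Real.sqrt ((r - a) / f r)) (𝓝[>] a) (𝓝 (Real.sqrt f')⁻¹) := by
      have := (Real.continuous_sqrt.tendsto f'⁻¹).comp h1
      simpa [Real.sqrt_inv, Function.comp_def] using this
    have h3 : Tendsto (fun r => (2 * Real.sqrt ((r - a) / f r) - 2 * Real.sqrt (r - a)) / r)
        (𝓝[>] a) (𝓝 ((2 * (Real.sqrt f')⁻¹ - 2 * 0) / a)) := by
      apply Tendsto.div
      · exact ((tendsto_const_nhds.mul h2).sub (tendsto_const_nhds.mul hga))
      · exact tendsto_id.mono_left nhdsWithin_le_nhds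
      · exact ha0
    have heq : (2 * (Real.sqrt f')⁻¹ - 2 * 0) / a = 2 / (a * Real.sqrt f') := by
      field_simp; ring
    rw [heq] at h3
    apply h3.congr'
    filter_upwards [Ioo_mem_nhdsGT_of_mem ⟨le_refl a, hac⟩] with r hr
    have hxa : 0 < r - a := sub_pos.2 hr.1
    have hfx : 0 < f r := hpos r (hIoocb hr)
    have hrpos : 0 < r := ha.trans hr.1
    have hsf : Real.sqrt (f r) ≠ 0 := (Real.sqrt_pos.2 hfx).ne'
    simp only [hgdef]
    rw [Real.sqrt_div hxa.le]
    have hs : Real.sqrt (r - a) ≠ 0 := (Real.sqrt_pos.2 hxa).ne'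
    field_simp
  -- L'Hôpital
  have limB : Tendsto (fun r => I r / Real.sqrt (r - a)) (𝓝[>] a)
      (𝓝 (2 / (a * Real.sqrt f'))) :=
    HasDerivAt.lhopital_zero_right_on_Ioo hac hIderiv hsderiv
      (fun x hx => by
        have hs0 : 0 < Real.sqrt (x - a) := Real.sqrt_pos.2 (sub_pos.2 hx.1)
        positivity) hI0 hga hdiv
  -- log term → 0
  have limA : Tendsto (fun r => Real.log (r / a) / Real.sqrt (r - a)) (𝓝[>] a) (𝓝 0) := by
    have hlog : Tendsto (fun r => (Real.log r - Real.log a) / (r - a)) (𝓝[>] a) (𝓝 a⁻¹) := by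
      have h1 := hasDerivAt_iff_tendsto_slope.1 (Real.hasDerivAt_log ha0)
      have h2 := h1.mono_left (nhdsWithin_mono a
        (fun x hx => Set.mem_compl_singleton_iff.2 (ne_of_gt hx)))
      exact h2.congr (fun x => by rw [slope_def_field])
    have h3 : Tendsto (fun r => (Real.log r - Real.log a) / (r - a) * Real.sqrt (r - a))
        (𝓝[>] a) (𝓝 (a⁻¹ * 0)) := hlog.mul hga
    rw [mul_zero] at h3
    apply h3.congr'
    filter_upwards [self_mem_nhdsWithin] with r hr
    have h1 : (0:ℝ) < r - a := sub_pos.2 hr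
    have h2 : Real.sqrt (r - a) ≠ 0 := (Real.sqrt_pos.2 h1).ne'
    rw [← Real.log_div (ne_of_gt (ha.trans hr)) ha0]
    field_simp
    rw [Real.sq_sqrt h1.le]
  -- assembly
  rw [nhdsWithin_Ioo_eq_nhdsGT hab]
  have key : Tendsto (fun r => Real.log (r / a) / Real.sqrt (r - a) + I r / Real.sqrt (r - a))
      (𝓝[>] a) (𝓝 (0 + 2 / (a * Real.sqrt f'))) := limA.add limB
  rw [zero_add] at key
  apply key.congr'
  filter_upwards [Ioo_mem_nhdsGT_of_mem ⟨le_refl a, hab⟩] with r hr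
  have hrpos : 0 < r := ha.trans hr.1
  rw [hρ r hr]
  have h1 : ρ₀ * r * Real.exp (I r) / (ρ₀ * a) = r / a * Real.exp (I r) := by
    field_simp
  rw [h1, Real.log_mul (by positivity) (Real.exp_ne_zero _), Real.log_exp, add_div]
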